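/- arXiv:1504.02444 — 5 statements merged into one kernel-verified Lean document; each statement's English description precedes it below -/
import Mathlib

section
/- For a complete observable FSM S with states s1 and s2, the pair (s1, s2) is not adaptively homing if and only if the intersection FSM S/s1 ∩ S/s2 contains a complete submachine (a nonempty subset of states, containing the initial state, closed in the sense that from every state in the subset every input has at least one transition leading back into the subset). -/
/-- A (non-initialized) finite state machine with transition relation `h ⊆ S × I × O × S`. -/
structure FSM (S I O : Type) where
  h : S → I → O → S → Prop

namespace FSM

variable {S I O Q : Type}

/-- `M` is complete: every input is defined at every state. -/
def Complete (M : FSM S I O) : Prop := ∀ s i, ∃ o s', M.h s i o s'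

/-- `M` is observable: the `io`-successor of a state is unique when it exists. -/
def Observable (M : FSM S I O) : Prop :=
  ∀ s i o t₁ t₂, M.h s i o t₁ → M.h s i o t₂ → t₁ = t₂

/-- `M.Runs s γ t` : `t` is reached from `s` along the trace `γ` (a list of input/output pairs). -/
inductive Runs (M : FSM S I O) : S → List (I × O) → S → Prop
  | nil (s : S) : Runs M s [] s
  | cons {s : S} {i : I} {o : O} {s' : S} {γ : List (I × O)} {t : S} :
      M.h s i o s' → Runs M s' γ t → Runs M s ((i, o) :: γ) t

/-- A deadlock state has no outgoing transitions. -/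
def Deadlock (M : FSM S I O) (q : S) : Prop := ∀ i o q', ¬ M.h q i o q'

/-- A test case: initially connected, single-input, output-complete, observable,
acyclic initialized FSM. -/
structure IsTestCase (P : FSM Q I O) (q0 : Q) : Prop where
  singleInput : ∀ q i₁ o₁ q₁ i₂ o₂ q₂, P.h q i₁ o₁ q₁ → P.h q i₂ o₂ q₂ → i₁ = i₂
  outputComplete : ∀ q i o q', P.h q i o q' → ∀ o', ∃ q'', P.h q i o' q''
  observable : P.Observable
  acyclic : ∀ q γ, γ ≠ ([] : List (I × O)) → ¬ P.Runs q γ q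
  connected : ∀ q, ∃ γ, P.Runs q0 γ q

/-- `P` (with initial state `q0`) is a homing test case for the set `S'` of states of `M`:
for every trace from `q0` to a deadlock state, the successors of all states of `S'`,
where they exist, coincide in a single state. -/
def IsHomingFor (M : FSM S I O) (S' : Set S) (P : FSM Q I O) (q0 : Q) : Prop :=
  ∀ γ q, P.Runs q0 γ q → P.Deadlock q →
    ∃ s : S, ∀ s' ∈ S', ∀ t, M.Runs s' γ t → t = s

/-- The set `S'` of states of `M` is adaptively homing: some (finite) homing test case exists. -/
def AdaptivelyHomingSet (M : FSM S I O) (S' : Set S) : Prop :=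
  ∃ (Q : Type) (_ : Fintype Q) (P : FSM Q I O) (q0 : Q),
    P.IsTestCase q0 ∧ IsHomingFor M S' P q0

/-- The pair `(s₁, s₂)` is adaptively homing. -/
def AdaptivelyHomingPair (M : FSM S I O) (s₁ s₂ : S) : Prop :=
  AdaptivelyHomingSet M {s₁, s₂}

/-- The intersection FSM `S/s₁ ∩ S/s₂`: states are pairs of states of `M`, and there is a
transition iff both components have the corresponding transition and the successors differ. -/
def inter (M : FSM S I O) : FSM (S × S) I O :=
  ⟨fun p i o p' => M.h p.1 i o p'.1 ∧ M.h p.2 i o p'.2 ∧ p'.1 ≠ p'.2⟩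

/-- A set `A` of states is input-closed in `M`: from every state of `A` every input has at
least one transition leading back into `A`. -/
def InputClosed (M : FSM S I O) (A : Set S) : Prop :=
  ∀ q ∈ A, ∀ i, ∃ o q', M.h q i o q' ∧ q' ∈ A

/-- The intersection `S/s₁ ∩ S/s₂` contains a complete submachine: a set of (distinct-component)
pairs containing the initial state `(s₁, s₂)` and input-closed in the intersection FSM. -/
def HasCompleteSubmachine (M : FSM S I O) (s₁ s₂ : S) : Prop :=
  ∃ A : Set (S × S), (s₁, s₂) ∈ A ∧ (∀ p ∈ A, p.1 ≠ p.2) ∧ InputClosed M.inter A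

/-- One round of the iterative deletion process: keep the states of `A` at which every input
has a transition into `A`. -/
def step (M : FSM S I O) (A : Set S) : Set S :=
  {q ∈ A | ∀ i, ∃ o q', M.h q i o q' ∧ q' ∈ A}

/-- Survivors of the deletion process after `n` rounds, starting from all states. -/
def surv (M : FSM S I O) : ℕ → Set S
  | 0 => Set.univ
  | n + 1 => step M (surv M n)

/-- Survivors of the deletion process on the intersection FSM after `n` rounds, starting
from all states of the intersection (pairs of distinct states). -/
def interSurv (M : FSM S I O) : ℕ → Set (S × S)
  | 0 => {p | p.1 ≠ p.2}
  | n + 1 => step M.inter (interSurv M n)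

/-- The greatest input-closed subset of states of the intersection FSM: the union of all
input-closed sets of distinct-component pairs. -/
def greatestInterClosed (M : FSM S I O) : Set (S × S) :=
  ⋃₀ {A : Set (S × S) | (∀ p ∈ A, p.1 ≠ p.2) ∧ InputClosed M.inter A}

end FSM

namespace FSMAux

open FSM

variable {S I O Q : Type}

theorem runs_unique {M : FSM S I O} (ho : M.Observable) :
    ∀ {γ : List (I × O)} {s t₁ t₂ : S}, M.Runs s γ t₁ → M.Runs s γ t₂ → t₁ = t₂ := by
  intro γ
  induction γ with
  | nil => intro s t₁ t₂ h1 h2; cases h1; cases h2; rfl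
  | cons x γ ih =>
    obtain ⟨i, o⟩ := x
    intro s t₁ t₂ h1 h2
    cases h1 with
    | cons ha hr1 =>
      cases h2 with
      | cons hb hr2 =>
        have := ho _ _ _ _ _ ha hb
        subst this
        exact ih hr1 hr2

theorem runs_snoc {M : FSM S I O} :
    ∀ {γ : List (I × O)} {s t u : S} {i : I} {o : O},
      M.Runs s γ t → M.h t i o u → M.Runs s (γ ++ [(i, o)]) u := by
  intro γ
  induction γ with
  | nil => intro s t u i o h1 h2; cases h1; exact Runs.cons h2 (Runs.nil _)
  | cons x γ ih =>
    obtain ⟨j, p⟩ := x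
    intro s t u i o h1 h2
    cases h1 with
    | cons ha hr => exact Runs.cons ha (ih hr h2)

theorem runs_snoc_inv {M : FSM S I O} :
    ∀ {γ : List (I × O)} {s u : S} {i : I} {o : O},
      M.Runs s (γ ++ [(i, o)]) u → ∃ t, M.Runs s γ t ∧ M.h t i o u := by
  intro γ
  induction γ with
  | nil =>
    intro s u i o h
    cases h with
    | cons ha hr => cases hr; exact ⟨s, Runs.nil _, ha⟩
  | cons x γ ih =>
    obtain ⟨j, p⟩ := x
    intro s u i o h
    cases h with
    | cons ha hr =>
      obtain ⟨t, r, hu⟩ := ih hr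
      exact ⟨t, Runs.cons ha r, hu⟩

theorem runs_trans {M : FSM S I O} :
    ∀ {γ δ : List (I × O)} {s t u : S},
      M.Runs s γ t → M.Runs t δ u → M.Runs s (γ ++ δ) u := by
  intro γ
  induction γ with
  | nil => intro δ s t u h1 h2; cases h1; exact h2
  | cons x γ ih =>
    obtain ⟨j, p⟩ := x
    intro δ s t u h1 h2
    cases h1 with
    | cons ha hr => exact Runs.cons ha (ih hr h2)

end FSMAux
namespace FSMAux2
open FSM FSMAux
variable {S I O Q : Type}

theorem step_subset (M : FSM S I O) (A : Set S) : M.step A ⊆ A := fun _ hq => hq.1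

theorem step_mono (M : FSM S I O) {A B : Set S} (hAB : A ⊆ B) : M.step A ⊆ M.step B := by
  rintro q ⟨h1, h2⟩
  refine ⟨hAB h1, fun i => ?_⟩
  obtain ⟨o, q', hq', hm⟩ := h2 i
  exact ⟨o, q', hq', hAB hm⟩

theorem interSurv_succ_subset (M : FSM S I O) : ∀ n, M.interSurv (n + 1) ⊆ M.interSurv n := by
  intro n
  induction n with
  | zero => exact step_subset _ _
  | succ n ih => exact step_mono _ ih

theorem interSurv_antitone (M : FSM S I O) {m n : ℕ} (h : m ≤ n) :
    M.interSurv n ⊆ M.interSurv m := by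
  induction h with
  | refl => exact le_refl _
  | step h ih => exact le_trans (interSurv_succ_subset M _) ih

theorem mem_interSurv_zero {M : FSM S I O} {p : S × S} (h : p.1 ≠ p.2) :
    p ∈ M.interSurv 0 := h

theorem ne_of_mem_interSurv {M : FSM S I O} {p : S × S} {n : ℕ} (h : p ∈ M.interSurv n) :
    p.1 ≠ p.2 := interSurv_antitone M (Nat.zero_le n) h

theorem exists_escape [Finite S] {M : FSM S I O} {s₁ s₂ : S}
    (h : ¬ M.HasCompleteSubmachine s₁ s₂) : ∃ K, (s₁, s₂) ∉ M.interSurv K := by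
  by_contra hcon
  push_neg at hcon
  apply h
  -- find a fixed point
  have key : ∀ m n : ℕ, m < n → M.interSurv m = M.interSurv n →
      M.interSurv (m + 1) = M.interSurv m := by
    intro m n hmn he
    refine le_antisymm (interSurv_succ_subset M m) ?_
    calc M.interSurv m = M.interSurv n := he
    _ ≤ M.interSurv (m + 1) := interSurv_antitone M (by omega)
  obtain ⟨m, n, hmn, he⟩ : ∃ m n : ℕ, m ≠ n ∧ M.interSurv m = M.interSurv n := by
    obtain ⟨m, n, hmn, he⟩ := Finite.exists_ne_map_eq_of_infinite (fun k : ℕ => M.interSurv k)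
    exact ⟨m, n, hmn, he⟩
  have hfix : ∃ m, M.interSurv (m + 1) = M.interSurv m := by
    rcases hmn.lt_or_gt with h' | h'
    · exact ⟨m, key m n h' he⟩
    · exact ⟨n, key n m h' he.symm⟩
  obtain ⟨m, hm⟩ := hfix
  refine ⟨M.interSurv m, hcon m, fun p hp => ne_of_mem_interSurv hp, ?_⟩
  intro q hq i
  have hq' : q ∈ M.interSurv (m + 1) := hm.symm ▸ hq
  obtain ⟨o, q', hqq, hmem⟩ := hq'.2 i
  exact ⟨o, q', hqq, hmem⟩

end FSMAux2
namespace FSMAux3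
open FSM FSMAux
variable {S I O Q : Type}

theorem AH_of_props [Fintype Q] (M : FSM S I O) (S' : Set S) (P : FSM Q I O) (q0 : Q)
    (h1 : ∀ q i₁ o₁ q₁ i₂ o₂ q₂, P.h q i₁ o₁ q₁ → P.h q i₂ o₂ q₂ → i₁ = i₂)
    (h2 : ∀ q i o q', P.h q i o q' → ∀ o', ∃ q'', P.h q i o' q'')
    (h3 : P.Observable)
    (h4 : ∀ q γ, γ ≠ ([] : List (I × O)) → ¬ P.Runs q γ q)
    (h5 : IsHomingFor M S' P q0) : M.AdaptivelyHomingSet S' := by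
  classical
  let R : Q → Prop := fun q => ∃ γ, P.Runs q0 γ q
  let Q' := {q : Q // R q}
  let P' : FSM Q' I O := ⟨fun a i o b => P.h a.1 i o b.1⟩
  have down : ∀ {a : Q'} {γ} {b : Q'}, P'.Runs a γ b → P.Runs a.1 γ b.1 := by
    intro a γ b h
    induction h with
    | nil => exact Runs.nil _
    | cons hs _ ih => exact Runs.cons hs ih
  have reach_succ : ∀ {a : Q} {i o b}, R a → P.h a i o b → R b := by
    rintro a i o b ⟨δ, hδ⟩ hstep
    exact ⟨δ ++ [(i, o)], runs_snoc hδ hstep⟩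
  have up : ∀ {a : Q} {γ} {b : Q}, P.Runs a γ b → ∀ (ha : R a) (hb : R b),
      P'.Runs ⟨a, ha⟩ γ ⟨b, hb⟩ := by
    intro a γ b h
    induction h with
    | nil =>
      intro ha hb
      have : (⟨_, ha⟩ : Q') = ⟨_, hb⟩ := Subtype.ext rfl
      rw [this]
      exact Runs.nil _
    | cons hs hr ih =>
      intro ha hb
      exact Runs.cons (show P'.h ⟨_, ha⟩ _ _ ⟨_, reach_succ ha hs⟩ from hs) (ih _ hb)
  have hq0 : R q0 := ⟨[], Runs.nil _⟩
  refine ⟨Q', Fintype.ofFinite _, P', ⟨q0, hq0⟩, ⟨?_, ?_, ?_, ?_, ?_⟩, ?_⟩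
  · intro q i₁ o₁ q₁ i₂ o₂ q₂ ha hb
    exact h1 q.1 i₁ o₁ q₁.1 i₂ o₂ q₂.1 ha hb
  · intro q i o q' hq o'
    obtain ⟨q'', hq''⟩ := h2 q.1 i o q'.1 hq o'
    exact ⟨⟨q'', reach_succ q.2 hq''⟩, hq''⟩
  · intro q i o t₁ t₂ ha hb
    exact Subtype.ext (h3 q.1 i o t₁.1 t₂.1 ha hb)
  · intro q γ hγ hr
    exact h4 q.1 γ hγ (down hr)
  · intro q
    obtain ⟨γ, hr⟩ := q.2
    exact ⟨γ, up hr hq0 q.2⟩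
  · intro γ q hr hd
    refine h5 γ q.1 (down hr) ?_
    intro i o q' hq'
    exact hd i o ⟨q', reach_succ q.2 hq'⟩ hq'

end FSMAux3
namespace FSMAux4
open FSM FSMAux FSMAux2 FSMAux3
variable {S I O : Type}

/-- measure used for acyclicity -/
def meas {α : Type} {n : ℕ} : Option (α × Fin n) → ℕ
  | none => 0
  | some qq => qq.2.1 + 1

theorem escape_input {M : FSM S I O} :
    ∀ (p : S × S) (k : ℕ), p ∉ M.interSurv k → p.1 ≠ p.2 →
      ∃ i : I, ∀ o p', M.inter.h p i o p' → p' ∉ M.interSurv (k - 1) := by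
  classical
  intro p k hk hne
  have hex : ∃ n, p ∉ M.interSurv n := ⟨k, hk⟩
  have hspec : p ∉ M.interSurv (Nat.find hex) := Nat.find_spec hex
  have hnk : Nat.find hex ≤ k := Nat.find_min' hex hk
  have hn0 : Nat.find hex ≠ 0 := fun h => hspec (h ▸ mem_interSurv_zero hne)
  obtain ⟨m, hm⟩ : ∃ m, Nat.find hex = m + 1 := ⟨Nat.find hex - 1, by omega⟩
  have hpm : p ∈ M.interSurv m := by
    by_contra h
    exact Nat.find_min hex (by omega) h
  rw [hm] at hspec
  have hstep : ¬ (p ∈ M.interSurv m ∧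
      ∀ i, ∃ o q', M.inter.h p i o q' ∧ q' ∈ M.interSurv m) := hspec
  have hni : ¬ ∀ i, ∃ o q', M.inter.h p i o q' ∧ q' ∈ M.interSurv m :=
    fun hall => hstep ⟨hpm, hall⟩
  push_neg at hni
  obtain ⟨i, hi⟩ := hni
  refine ⟨i, fun o p' htr hmem => ?_⟩
  exact hi o p' htr (interSurv_antitone M (show m ≤ k - 1 by omega) hmem)

theorem homing_of_escape [Fintype S] [Fintype I] [Fintype O]
    (M : FSM S I O) (hc : M.Complete) (ho : M.Observable) (s₁ s₂ : S) (K : ℕ)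
    (hK : (s₁, s₂) ∉ M.interSurv K) : M.AdaptivelyHomingPair s₁ s₂ := by
  classical
  choose ip hip using @escape_input S I O M
  set P : FSM (Option ((S × S) × Fin (K + 1))) I O := ⟨fun q i o q' =>
    ∃ (p : S × S) (k : ℕ) (hk : k < K + 1) (h₁ : p ∉ M.interSurv k) (h₂ : p.1 ≠ p.2),
      q = some (p, ⟨k, hk⟩) ∧ i = ip p k h₁ h₂ ∧
      ((∃ t₁ t₂, M.h p.1 i o t₁ ∧ M.h p.2 i o t₂ ∧ t₁ ≠ t₂ ∧
          (t₁, t₂) ∉ M.interSurv (k - 1) ∧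
          q' = some ((t₁, t₂), ⟨k - 1, by omega⟩)) ∨
        ((¬ ∃ t₁ t₂, M.h p.1 i o t₁ ∧ M.h p.2 i o t₂ ∧ t₁ ≠ t₂) ∧ q' = none))⟩ with hP
  have hKlt : K < K + 1 := by omega
  set q0 : Option ((S × S) × Fin (K + 1)) := some ((s₁, s₂), ⟨K, hKlt⟩) with hq0
  have kpos : ∀ {p : S × S} {k : ℕ}, p ∉ M.interSurv k → p.1 ≠ p.2 → 0 < k := by
    intro p k h₁ h₂
    rcases k with _ | k
    · exact absurd (mem_interSurv_zero h₂) h₁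
    · omega
  have μdec : ∀ q i o q', P.h q i o q' → meas q' < meas q := by
    rintro q i o q' ⟨p, k, hk, h₁, h₂, rfl, hi, hbr | hbr⟩
    · obtain ⟨t₁, t₂, ha, hb, hne', hnotin, rfl⟩ := hbr
      have := kpos h₁ h₂
      simp only [meas]
      omega
    · rw [hbr.2]
      simp only [meas]
      omega
  apply AH_of_props M _ P q0
  · -- single input
    rintro q i₁ o₁ q₁ i₂ o₂ q₂ ⟨p, k, hk, h₁, h₂, rfl, hi₁, _⟩
      ⟨p', k', hk', h₁', h₂', heq, hi₂, _⟩
    simp only [Option.some.injEq, Prod.mk.injEq, Fin.mk.injEq] at heq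
    obtain ⟨rfl, rfl⟩ : p = p' ∧ k = k' := ⟨heq.1, heq.2⟩
    exact hi₁.trans hi₂.symm
  · -- output complete
    rintro q i o q' ⟨p, k, hk, h₁, h₂, rfl, hi, _⟩ o'
    by_cases hd : ∃ t₁ t₂, M.h p.1 i o' t₁ ∧ M.h p.2 i o' t₂ ∧ t₁ ≠ t₂
    · obtain ⟨t₁, t₂, ha, hb, hne'⟩ := hd
      have hnotin : (t₁, t₂) ∉ M.interSurv (k - 1) := by
        apply hip p k h₁ h₂ o' (t₁, t₂)
        rw [← hi]
        exact ⟨ha, hb, hne'⟩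
      exact ⟨some ((t₁, t₂), ⟨k - 1, by omega⟩), p, k, hk, h₁, h₂, rfl, hi,
        Or.inl ⟨t₁, t₂, ha, hb, hne', hnotin, rfl⟩⟩
    · exact ⟨none, p, k, hk, h₁, h₂, rfl, hi, Or.inr ⟨hd, rfl⟩⟩
  · -- observable
    rintro q i o a b ⟨p, k, hk, h₁, h₂, rfl, hi₁, hbr₁⟩
      ⟨p', k', hk', h₁', h₂', heq, hi₂, hbr₂⟩
    simp only [Option.some.injEq, Prod.mk.injEq, Fin.mk.injEq] at heq
    obtain ⟨rfl, rfl⟩ : p = p' ∧ k = k' := ⟨heq.1, heq.2⟩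
    rcases hbr₁ with ⟨t₁, t₂, ha, hb, hne', hni, rfl⟩ | ⟨hneg, rfl⟩
    · rcases hbr₂ with ⟨u₁, u₂, ha', hb', hne'', hni', rfl⟩ | ⟨hneg, _⟩
      · obtain rfl : t₁ = u₁ := ho _ _ _ _ _ ha ha'
        obtain rfl : t₂ = u₂ := ho _ _ _ _ _ hb hb'
        rfl
      · exact absurd ⟨t₁, t₂, ha, hb, hne'⟩ hneg
    · rcases hbr₂ with ⟨u₁, u₂, ha', hb', hne'', hni', rfl⟩ | ⟨_, rfl⟩
      · exact absurd ⟨u₁, u₂, ha', hb', hne''⟩ hneg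
      · rfl
  · -- acyclic
    have hrun : ∀ (γ : List (I × O)) q t, P.Runs q γ t → meas t + γ.length ≤ meas q := by
      intro γ q t h
      induction h with
      | nil => simp
      | cons hs _ ih =>
        have := μdec _ _ _ _ hs
        simp only [List.length_cons]
        omega
    intro q γ hγ hr
    have h := hrun γ q q hr
    have hl : γ.length ≠ 0 := fun h0 => hγ (List.length_eq_zero_iff.mp h0)
    omega
  · -- homing
    have inv : ∀ (γ : List (I × O)) q, P.Runs q0 γ q →
        (∀ (p : S × S) (k : ℕ) (hk : k < K + 1), q = some (p, ⟨k, hk⟩) →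
          M.Runs s₁ γ p.1 ∧ M.Runs s₂ γ p.2 ∧ p ∉ M.interSurv k) ∧
        (q = none → ∃ s : S, (∀ t, M.Runs s₁ γ t → t = s) ∧ (∀ t, M.Runs s₂ γ t → t = s)) := by
      intro γ
      induction γ using List.reverseRecOn with
      | nil =>
        intro q hr
        have hq : q = q0 := by cases hr; rfl
        subst hq
        constructor
        · intro p k hk hq
          rw [hq0] at hq
          simp only [Option.some.injEq, Prod.mk.injEq, Fin.mk.injEq] at hq
          obtain ⟨rfl, rfl⟩ : (s₁, s₂) = p ∧ K = k := ⟨hq.1, hq.2⟩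
          exact ⟨Runs.nil _, Runs.nil _, hK⟩
        · intro h; rw [hq0] at h; simp at h
      | append_singleton γ x ih =>
        obtain ⟨i, o⟩ := x
        intro q hr
        obtain ⟨u, hru, hstep⟩ := runs_snoc_inv hr
        obtain ⟨p, k, hk, h₁, h₂, rfl, hi, hbr⟩ := hstep
        obtain ⟨r1, r2, -⟩ := (ih _ hru).1 p k hk rfl
        constructor
        · intro p' k' hk' hq'
          rcases hbr with ⟨t₁, t₂, ha, hb, hne', hni, rfl⟩ | ⟨_, rfl⟩
          · simp only [Option.some.injEq, Prod.mk.injEq, Fin.mk.injEq] at hq'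
            obtain ⟨rfl, rfl⟩ : (t₁, t₂) = p' ∧ k - 1 = k' := ⟨hq'.1, hq'.2⟩
            exact ⟨runs_snoc r1 ha, runs_snoc r2 hb, hni⟩
          · cases hq'
        · intro hq
          rcases hbr with ⟨t₁, t₂, ha, hb, hne', hni, rfl⟩ | ⟨hneg, rfl⟩
          · cases hq
          · by_cases e1 : ∃ t, M.h p.1 i o t
            · obtain ⟨t₁, ht₁⟩ := e1
              refine ⟨t₁, fun t ht => ?_, fun t ht => ?_⟩
              · obtain ⟨u₁, ru₁, hs₁⟩ := runs_snoc_inv ht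
                obtain rfl : u₁ = p.1 := runs_unique ho ru₁ r1
                exact ho _ _ _ _ _ hs₁ ht₁
              · obtain ⟨u₂, ru₂, hs₂⟩ := runs_snoc_inv ht
                obtain rfl : u₂ = p.2 := runs_unique ho ru₂ r2
                by_contra hte
                exact hneg ⟨t₁, t, ht₁, hs₂, fun h => hte h.symm⟩
            · by_cases e2 : ∃ t, M.h p.2 i o t
              · obtain ⟨t₂, ht₂⟩ := e2
                refine ⟨t₂, fun t ht => ?_, fun t ht => ?_⟩
                · obtain ⟨u₁, ru₁, hs₁⟩ := runs_snoc_inv ht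
                  obtain rfl : u₁ = p.1 := runs_unique ho ru₁ r1
                  exact absurd ⟨t, hs₁⟩ e1
                · obtain ⟨u₂, ru₂, hs₂⟩ := runs_snoc_inv ht
                  obtain rfl : u₂ = p.2 := runs_unique ho ru₂ r2
                  exact ho _ _ _ _ _ hs₂ ht₂
              · refine ⟨s₁, fun t ht => ?_, fun t ht => ?_⟩
                · obtain ⟨u₁, ru₁, hs₁⟩ := runs_snoc_inv ht
                  obtain rfl : u₁ = p.1 := runs_unique ho ru₁ r1
                  exact absurd ⟨t, hs₁⟩ e1
                · obtain ⟨u₂, ru₂, hs₂⟩ := runs_snoc_inv ht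
                  obtain rfl : u₂ = p.2 := runs_unique ho ru₂ r2
                  exact absurd ⟨t, hs₂⟩ e2
    intro γ q hr hd
    match q with
    | none =>
      obtain ⟨s, hs1, hs2⟩ := (inv γ none hr).2 rfl
      refine ⟨s, fun s' hs' t ht => ?_⟩
      rcases hs' with rfl | rfl
      · exact hs1 t ht
      · exact hs2 t ht
    | some (p, ⟨k, hk⟩) =>
      obtain ⟨r1, r2, hnot⟩ := (inv γ _ hr).1 p k hk rfl
      by_cases hpe : p.1 = p.2
      · refine ⟨p.1, fun s' hs' t ht => ?_⟩
        rcases hs' with rfl | rfl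
        · exact runs_unique ho ht r1
        · exact (runs_unique ho ht r2).trans hpe.symm
      · exfalso
        obtain ⟨o, t₁, ht₁⟩ := hc p.1 (ip p k hnot hpe)
        by_cases hd2 : ∃ u₁ u₂, M.h p.1 (ip p k hnot hpe) o u₁ ∧
            M.h p.2 (ip p k hnot hpe) o u₂ ∧ u₁ ≠ u₂
        · obtain ⟨u₁, u₂, ha, hb, hne'⟩ := hd2
          have hni : (u₁, u₂) ∉ M.interSurv (k - 1) :=
            hip p k hnot hpe o (u₁, u₂) ⟨ha, hb, hne'⟩
          exact hd _ o _ ⟨p, k, hk, hnot, hpe, rfl, rfl,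
            Or.inl ⟨u₁, u₂, ha, hb, hne', hni, rfl⟩⟩
        · exact hd _ o _ ⟨p, k, hk, hnot, hpe, rfl, rfl, Or.inr ⟨hd2, rfl⟩⟩

end FSMAux4
namespace FSMAux5
open FSM FSMAux FSMAux2 FSMAux3 FSMAux4
variable {S I O : Type}

theorem not_AH_of_sub {M : FSM S I O} {s₁ s₂ : S}
    (hsub : M.HasCompleteSubmachine s₁ s₂) : ¬ M.AdaptivelyHomingPair s₁ s₂ := by
  rintro ⟨Q, fQ, P, q0, tc, hom⟩
  obtain ⟨A, hmem, hdist, hclosed⟩ := hsub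
  classical
  haveI : Finite Q := Finite.of_fintype Q
  let r : Q → Q → Prop := fun b a => ∃ γ, γ ≠ ([] : List (I × O)) ∧ P.Runs a γ b
  haveI : IsTrans Q r := ⟨by
    rintro c b a ⟨γ1, h1, r1⟩ ⟨γ2, h2, r2⟩
    exact ⟨γ2 ++ γ1, by simp [h2], runs_trans r2 r1⟩⟩
  haveI : IsIrrefl Q r := ⟨by
    rintro a ⟨γ, hγ, hr⟩
    exact tc.acyclic a γ hγ hr⟩
  have wf := Finite.wellFounded_of_trans_of_irrefl r
  have claim : ∀ q : Q, ∀ γ (p : S × S), p ∈ A → P.Runs q0 γ q →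
      M.Runs s₁ γ p.1 → M.Runs s₂ γ p.2 → False := by
    intro q
    induction q using wf.induction with
    | _ q IH =>
      intro γ p hpA hr hr1 hr2
      by_cases hdq : P.Deadlock q
      · obtain ⟨s, hs⟩ := hom γ q hr hdq
        have e1 := hs s₁ (Or.inl rfl) p.1 hr1
        have e2 := hs s₂ (Or.inr rfl) p.2 hr2
        exact hdist p hpA (e1.trans e2.symm)
      · simp only [Deadlock, not_forall, not_not] at hdq
        obtain ⟨i, o, q', hq'⟩ := hdq
        obtain ⟨o₁, p', htrans, hp'A⟩ := hclosed p hpA i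
        obtain ⟨q'', hq''⟩ := tc.outputComplete q i o q' hq' o₁
        exact IH q'' ⟨[(i, o₁)], by simp, Runs.cons hq'' (Runs.nil _)⟩
          (γ ++ [(i, o₁)]) p' hp'A (runs_snoc hr hq'')
          (runs_snoc hr1 htrans.1) (runs_snoc hr2 htrans.2.1)
  exact claim q0 [] (s₁, s₂) hmem (Runs.nil _) (Runs.nil _) (Runs.nil _)

end FSMAux5


/-- the pair `(s₁, s₂)` is not adaptively homing iff the intersection
`S/s₁ ∩ S/s₂` contains a complete submachine. -/
theorem pair_not_adaptively_homing_iff_hasCompleteSubmachine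
    {S I O : Type} [Fintype S] [Fintype I] [Fintype O]
    (M : FSM S I O) (hc : M.Complete) (ho : M.Observable) (s₁ s₂ : S) (hne : s₁ ≠ s₂) :
    ¬ M.AdaptivelyHomingPair s₁ s₂ ↔ M.HasCompleteSubmachine s₁ s₂ := by
  constructor
  · intro hnah
    by_contra hns
    obtain ⟨K, hK⟩ := FSMAux2.exists_escape hns
    exact hnah (FSMAux4.homing_of_escape M hc ho s₁ s₂ K hK)
  · exact fun hsub => FSMAux5.not_AH_of_sub hsub
end

section
/- For a complete observable FSM S with states s1 and s2, the pair (s1, s2) is adaptively homing if and only if the intersection FSM S/s1 ∩ S/s2 has no complete submachine, i.e., every submachine has some state at which some input is undefined. -/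
namespace FSM

section Aux

variable {S I O Q : Type}

theorem runs_trans {M : FSM S I O} {q m t : S} {γ₁ γ₂ : List (I × O)}
    (h1 : M.Runs q γ₁ m) (h2 : M.Runs m γ₂ t) : M.Runs q (γ₁ ++ γ₂) t := by
  induction h1 with
  | nil s => exact h2
  | cons hstep _ ih => exact .cons hstep (ih h2)

theorem runs_split {M : FSM S I O} {q t : S} {γ : List (I × O)} (h : M.Runs q γ t) :
    ∀ n : ℕ, ∃ m, M.Runs q (γ.take n) m ∧ M.Runs m (γ.drop n) t := by
  induction h with
  | nil s =>
    intro n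
    refine ⟨s, ?_, ?_⟩ <;> simp only [List.take_nil, List.drop_nil] <;> exact .nil s
  | cons hstep hrun ih =>
    intro n
    cases n with
    | zero => exact ⟨_, .nil _, .cons hstep hrun⟩
    | succ k =>
      obtain ⟨m, h1, h2⟩ := ih k
      exact ⟨m, .cons hstep h1, h2⟩

theorem runs_det {M : FSM S I O} (ho : M.Observable) {q t₁ t₂ : S} {γ : List (I × O)}
    (h1 : M.Runs q γ t₁) (h2 : M.Runs q γ t₂) : t₁ = t₂ := by
  induction h1 generalizing t₂ with
  | nil s => cases h2; rfl
  | cons hstep hrun ih =>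
    cases h2 with
    | cons hstep2 hrun2 =>
      obtain rfl := ho _ _ _ _ _ hstep2 hstep
      exact ih hrun2

theorem runs_snoc_inv {M : FSM S I O} {q t : S} {i : I} {o : O} {γ : List (I × O)}
    (h : M.Runs q (γ ++ [(i, o)]) t) : ∃ m, M.Runs q γ m ∧ M.h m i o t := by
  obtain ⟨m, h1, h2⟩ := runs_split h γ.length
  rw [List.take_left] at h1
  rw [List.drop_left] at h2
  refine ⟨m, h1, ?_⟩
  cases h2 with
  | cons hstep hrun => cases hrun; exact hstep

theorem runs_length_lt [Fintype Q] {P : FSM Q I O} (hobs : P.Observable)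
    (hacyc : ∀ q γ, γ ≠ ([] : List (I × O)) → ¬ P.Runs q γ q)
    {q0 t : Q} {γ : List (I × O)} (hr : P.Runs q0 γ t) : γ.length < Fintype.card Q := by
  classical
  have key : ∀ n : ℕ, ∃ m, P.Runs q0 (γ.take n) m ∧ P.Runs m (γ.drop n) t :=
    fun n => runs_split hr n
  have hlt : ∀ a b : Fin (γ.length + 1), a < b → (key a.1).choose ≠ (key b.1).choose := by
    intro a b hab heq
    obtain ⟨ha1, ha2⟩ := (key a.1).choose_spec
    obtain ⟨hb1, hb2⟩ := (key b.1).choose_spec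
    obtain ⟨m, hm1, hm2⟩ := runs_split ha2 (b.1 - a.1)
    have hcomp : P.Runs q0 (γ.take b.1) m := by
      have hab' : a.1 + (b.1 - a.1) = b.1 := by omega
      rw [← hab', List.take_add]
      exact runs_trans ha1 hm1
    have hmfb : m = (key b.1).choose := runs_det hobs hcomp hb1
    rw [hmfb, ← heq] at hm1
    refine hacyc _ _ ?_ hm1
    have hlen : ((γ.drop a.1).take (b.1 - a.1)).length ≠ 0 := by
      have hb := b.isLt
      have : (a : ℕ) < b := hab
      simp only [List.length_take, List.length_drop]
      omega
    intro hnil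
    rw [hnil] at hlen
    exact hlen rfl
  have hinj : Function.Injective (fun k : Fin (γ.length + 1) => (key k.1).choose) := by
    intro a b hab
    rcases lt_trichotomy a b with h | h | h
    · exact absurd hab (hlt a b h)
    · exact h
    · exact absurd hab.symm (hlt b a h)
  have hcard := Fintype.card_le_of_injective _ hinj
  simp only [Fintype.card_fin] at hcard
  omega

/-- Rank: first stage of the deletion process at which `p` is deleted. -/
noncomputable def rankOf (M : FSM S I O) (p : S × S) : ℕ := sInf {n | p ∉ M.interSurv n}

theorem rank_notin (M : FSM S I O) {p : S × S} (h : ∃ n, p ∉ M.interSurv n) :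
    p ∉ M.interSurv (M.rankOf p) := Nat.sInf_mem h

theorem rank_in_of_lt (M : FSM S I O) {p : S × S} {m : ℕ} (h : m < M.rankOf p) :
    p ∈ M.interSurv m := by
  by_contra hm
  have h2 : M.rankOf p ≤ m := Nat.sInf_le hm
  omega

theorem rank_pos (M : FSM S I O) {p : S × S} (hne : p.1 ≠ p.2)
    (h : ∃ n, p ∉ M.interSurv n) : 0 < M.rankOf p := by
  rcases Nat.eq_zero_or_pos (M.rankOf p) with h0 | h1
  · have hni := M.rank_notin h
    rw [h0] at hni
    exact absurd hne hni
  · exact h1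

theorem exists_bad_input (M : FSM S I O) {p : S × S} (hr : 0 < M.rankOf p) :
    ∃ i : I, ∀ o q', M.inter.h p i o q' → q' ∉ M.interSurv (M.rankOf p - 1) := by
  have hsetne : ∃ n, p ∉ M.interSurv n := by
    by_contra hcon
    push_neg at hcon
    have : M.rankOf p = 0 := by
      have : {n | p ∉ M.interSurv n} = ∅ := by
        ext n; simp [hcon n]
      rw [rankOf, this, Nat.sInf_empty]
    omega
  have hmem : p ∈ M.interSurv (M.rankOf p - 1) := M.rank_in_of_lt (by omega)
  have hnot : p ∉ M.interSurv (M.rankOf p - 1 + 1) := by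
    rw [Nat.sub_add_cancel hr]
    exact M.rank_notin hsetne
  by_contra hcon
  push_neg at hcon
  exact hnot ⟨hmem, hcon⟩

/-- The input chosen at pair `p` by the homing strategy. -/
noncomputable def insOf (M : FSM S I O) [Nonempty I] (p : S × S) : I :=
  if h : 0 < M.rankOf p then (M.exists_bad_input h).choose else Classical.arbitrary I

theorem insOf_spec (M : FSM S I O) [Nonempty I] {p : S × S} (h : 0 < M.rankOf p) :
    ∀ o q', M.inter.h p (M.insOf p) o q' → q' ∉ M.interSurv (M.rankOf p - 1) := by
  have : M.insOf p = (M.exists_bad_input h).choose := dif_pos h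
  rw [this]
  exact (M.exists_bad_input h).choose_spec

/-- The raw (unpruned) homing test case machine. -/
noncomputable def rawTC (M : FSM S I O) [Nonempty I] : FSM (Sum (S × S) Unit) I O :=
  ⟨fun q i o q' =>
    match q with
    | Sum.inl p => 0 < M.rankOf p ∧ i = M.insOf p ∧
        ((∃ u₁ u₂, M.h p.1 i o u₁ ∧ M.h p.2 i o u₂ ∧ u₁ ≠ u₂ ∧ q' = Sum.inl (u₁, u₂)) ∨
         ((¬ ∃ u₁ u₂, M.h p.1 i o u₁ ∧ M.h p.2 i o u₂ ∧ u₁ ≠ u₂) ∧ q' = Sum.inr ()))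
    | Sum.inr _ => False⟩

/-- Measure decreasing along transitions of `rawTC`. -/
noncomputable def rawMeas (M : FSM S I O) : Sum (S × S) Unit → ℕ
  | Sum.inl p => M.rankOf p + 1
  | Sum.inr _ => 0

theorem rawTC_step_lt [Nonempty I] {M : FSM S I O} {q q' : Sum (S × S) Unit} {i : I} {o : O}
    (h : (M.rawTC).h q i o q') : M.rawMeas q' < M.rawMeas q := by
  cases q with
  | inr u => exact h.elim
  | inl p =>
    obtain ⟨hr, rfl, hcase⟩ := h
    rcases hcase with ⟨u₁, u₂, h1, h2, hne, rfl⟩ | ⟨_, rfl⟩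
    · have hbad := M.insOf_spec hr o (u₁, u₂) ⟨h1, h2, hne⟩
      have hle : M.rankOf (u₁, u₂) ≤ M.rankOf p - 1 := Nat.sInf_le hbad
      simp only [rawMeas]
      omega
    · simp only [rawMeas]
      omega

theorem rawTC_run_lt [Nonempty I] {M : FSM S I O} {q t : Sum (S × S) Unit}
    {γ : List (I × O)} (h : (M.rawTC).Runs q γ t) (hγ : γ ≠ []) :
    M.rawMeas t < M.rawMeas q := by
  induction h with
  | nil s => exact absurd rfl hγ
  | cons hstep hrun ih =>
    cases hrun with
    | nil => exact rawTC_step_lt hstep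
    | cons h2 h3 => exact lt_trans (ih (by simp)) (rawTC_step_lt hstep)

theorem rawTC_acyclic [Nonempty I] (M : FSM S I O) :
    ∀ (q : Sum (S × S) Unit) (γ : List (I × O)), γ ≠ [] → ¬ (M.rawTC).Runs q γ q :=
  fun _ _ hγ hr => absurd (rawTC_run_lt hr hγ) (lt_irrefl _)

theorem rawTC_single [Nonempty I] (M : FSM S I O) :
    ∀ (q : Sum (S × S) Unit) i₁ o₁ q₁ i₂ o₂ q₂,
      (M.rawTC).h q i₁ o₁ q₁ → (M.rawTC).h q i₂ o₂ q₂ → i₁ = i₂ := by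
  intro q i₁ o₁ q₁ i₂ o₂ q₂ h1 h2
  cases q with
  | inr u => exact h1.elim
  | inl p => rw [h1.2.1, h2.2.1]

theorem rawTC_oc [Nonempty I] (M : FSM S I O) :
    ∀ (q : Sum (S × S) Unit) i o q', (M.rawTC).h q i o q' →
      ∀ o', ∃ q'', (M.rawTC).h q i o' q'' := by
  intro q i o q' h o'
  cases q with
  | inr u => exact h.elim
  | inl p =>
    obtain ⟨hr, hieq, -⟩ := h
    by_cases hex : ∃ u₁ u₂, M.h p.1 i o' u₁ ∧ M.h p.2 i o' u₂ ∧ u₁ ≠ u₂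
    · obtain ⟨u₁, u₂, h1, h2, hne⟩ := hex
      exact ⟨Sum.inl (u₁, u₂), hr, hieq, Or.inl ⟨u₁, u₂, h1, h2, hne, rfl⟩⟩
    · exact ⟨Sum.inr (), hr, hieq, Or.inr ⟨hex, rfl⟩⟩

theorem rawTC_obs [Nonempty I] {M : FSM S I O} (ho : M.Observable) : (M.rawTC).Observable := by
  intro q i o t₁ t₂ h1 h2
  cases q with
  | inr u => exact h1.elim
  | inl p =>
    obtain ⟨-, -, hc1⟩ := h1
    obtain ⟨-, -, hc2⟩ := h2
    rcases hc1 with ⟨u₁, u₂, hu1, hu2, hune, rfl⟩ | ⟨hnex, rfl⟩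
    · rcases hc2 with ⟨v₁, v₂, hv1, hv2, hvne, rfl⟩ | ⟨hnex2, rfl⟩
      · rw [ho _ _ _ _ _ hu1 hv1, ho _ _ _ _ _ hu2 hv2]
      · exact absurd ⟨u₁, u₂, hu1, hu2, hune⟩ hnex2
    · rcases hc2 with ⟨v₁, v₂, hv1, hv2, hvne, rfl⟩ | ⟨-, rfl⟩
      · exact absurd ⟨v₁, v₂, hv1, hv2, hvne⟩ hnex
      · rfl

theorem rawTC_homing [Nonempty I] {M : FSM S I O} (ho : M.Observable)
    {s₁ s₂ : S} (hne : s₁ ≠ s₂) (hO : Nonempty O)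
    (hNN : ∃ N, (s₁, s₂) ∉ M.interSurv N) :
    IsHomingFor M {s₁, s₂} (M.rawTC) (Sum.inl (s₁, s₂)) := by
  have key : ∀ (γ : List (I × O)) (q : Sum (S × S) Unit),
      (M.rawTC).Runs (Sum.inl (s₁, s₂)) γ q →
      ((q = Sum.inr () → ∃ s : S, ∀ s' ∈ ({s₁, s₂} : Set S), ∀ t, M.Runs s' γ t → t = s) ∧
       (∀ p : S × S, q = Sum.inl p → 0 < M.rankOf p ∧
          (∀ t, M.Runs s₁ γ t → t = p.1) ∧ (∀ t, M.Runs s₂ γ t → t = p.2))) := by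
    intro γ
    induction γ using List.reverseRecOn with
    | nil =>
      intro q hq
      cases hq
      constructor
      · intro h; exact absurd h (by simp)
      · rintro p hp
        injection hp with hp'
        subst hp'
        refine ⟨M.rank_pos hne hNN, ?_, ?_⟩ <;>
          · intro t ht; cases ht; rfl
    | append_singleton δ io ih =>
      obtain ⟨i, o⟩ := io
      intro q hq
      obtain ⟨m, hm, hstep⟩ := runs_snoc_inv hq
      cases m with
      | inr u => exact hstep.elim
      | inl p =>
        obtain ⟨hrk, hs1, hs2⟩ := (ih (Sum.inl p) hm).2 p rfl
        obtain ⟨hr0, hieq, hcase⟩ := hstep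
        subst hieq
        rcases hcase with ⟨u₁, u₂, hu1, hu2, hune, rfl⟩ | ⟨hnex, rfl⟩
        · constructor
          · intro h; exact absurd h (by simp)
          · rintro p' hp'
            injection hp' with hp''
            subst hp''
            have hbad := M.insOf_spec hrk o (u₁, u₂) ⟨hu1, hu2, hune⟩
            refine ⟨M.rank_pos hune ⟨_, hbad⟩, ?_, ?_⟩
            · intro t ht
              obtain ⟨m₁, hm₁, hst₁⟩ := runs_snoc_inv ht
              rw [hs1 m₁ hm₁] at hst₁
              exact ho _ _ _ _ _ hst₁ hu1
            · intro t ht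
              obtain ⟨m₂, hm₂, hst₂⟩ := runs_snoc_inv ht
              rw [hs2 m₂ hm₂] at hst₂
              exact ho _ _ _ _ _ hst₂ hu2
        · constructor
          · intro _
            by_cases he1 : ∃ u, M.h p.1 (M.insOf p) o u
            · obtain ⟨u, hu⟩ := he1
              refine ⟨u, ?_⟩
              intro s' hs' t ht
              obtain ⟨m', hm', hst'⟩ := runs_snoc_inv ht
              simp only [Set.mem_insert_iff, Set.mem_singleton_iff] at hs'
              rcases hs' with rfl | rfl
              · rw [hs1 m' hm'] at hst'
                exact ho _ _ _ _ _ hst' hu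
              · rw [hs2 m' hm'] at hst'
                by_contra htu
                exact hnex ⟨u, t, hu, hst', fun e => htu e.symm⟩
            · by_cases he2 : ∃ v, M.h p.2 (M.insOf p) o v
              · obtain ⟨v, hv⟩ := he2
                refine ⟨v, ?_⟩
                intro s' hs' t ht
                obtain ⟨m', hm', hst'⟩ := runs_snoc_inv ht
                simp only [Set.mem_insert_iff, Set.mem_singleton_iff] at hs'
                rcases hs' with rfl | rfl
                · rw [hs1 m' hm'] at hst'
                  exact absurd ⟨t, hst'⟩ he1
                · rw [hs2 m' hm'] at hst'
                  exact ho _ _ _ _ _ hst' hv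
              · refine ⟨s₁, ?_⟩
                intro s' hs' t ht
                obtain ⟨m', hm', hst'⟩ := runs_snoc_inv ht
                simp only [Set.mem_insert_iff, Set.mem_singleton_iff] at hs'
                rcases hs' with rfl | rfl
                · rw [hs1 m' hm'] at hst'
                  exact absurd ⟨t, hst'⟩ he1
                · rw [hs2 m' hm'] at hst'
                  exact absurd ⟨t, hst'⟩ he2
          · intro p' hp'; exact absurd hp' (by simp)
  intro γ q hr hd
  have hinv := key γ q hr
  cases q with
  | inr u => cases u; exact hinv.1 rfl
  | inl p =>
    exfalso
    obtain ⟨hrk, -, -⟩ := hinv.2 p rfl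
    obtain ⟨o⟩ := hO
    by_cases hex : ∃ u₁ u₂, M.h p.1 (M.insOf p) o u₁ ∧ M.h p.2 (M.insOf p) o u₂ ∧ u₁ ≠ u₂
    · obtain ⟨u₁, u₂, h1, h2, hne'⟩ := hex
      exact hd (M.insOf p) o (Sum.inl (u₁, u₂)) ⟨hrk, rfl, Or.inl ⟨u₁, u₂, h1, h2, hne', rfl⟩⟩
    · exact hd (M.insOf p) o (Sum.inr ()) ⟨hrk, rfl, Or.inr ⟨hex, rfl⟩⟩

/-- Restricting a machine with all test-case properties except connectedness to its
reachable part yields an adaptive homing witness. -/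
theorem prune [Fintype Q] (M : FSM S I O) (S' : Set S) (P : FSM Q I O) (q0 : Q)
    (hsi : ∀ q i₁ o₁ q₁ i₂ o₂ q₂, P.h q i₁ o₁ q₁ → P.h q i₂ o₂ q₂ → i₁ = i₂)
    (hoc : ∀ q i o q', P.h q i o q' → ∀ o', ∃ q'', P.h q i o' q'')
    (hob : P.Observable)
    (hac : ∀ q γ, γ ≠ ([] : List (I × O)) → ¬ P.Runs q γ q)
    (hhom : IsHomingFor M S' P q0) :
    M.AdaptivelyHomingSet S' := by
  classical
  let R : Set Q := {q | ∃ γ, P.Runs q0 γ q}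
  have hRdef : ∀ q : Q, q ∈ R ↔ ∃ γ, P.Runs q0 γ q := fun q => Iff.rfl
  let P' : FSM R I O := ⟨fun a i o b => P.h a.1 i o b.1⟩
  have hproj : ∀ {a : ↥R} {γ : List (I × O)} {b : ↥R}, P'.Runs a γ b → P.Runs a.1 γ b.1 := by
    intro a γ b h
    induction h with
    | nil s => exact .nil _
    | cons hstep _ ih => exact .cons hstep ih
  have hlift : ∀ (γ : List (I × O)) (q t : Q), P.Runs q γ t →
      ∀ hq : q ∈ R, ∃ ht : t ∈ R, P'.Runs ⟨q, hq⟩ γ ⟨t, ht⟩ := by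
    intro γ q t h
    induction h with
    | nil s => intro hq; exact ⟨hq, .nil _⟩
    | @cons s i o s' δ t hstep hrun ih =>
      intro hq
      obtain ⟨δ0, hδ0⟩ := (hRdef s).mp hq
      have hs' : s' ∈ R := (hRdef s').mpr ⟨δ0 ++ [(i, o)], runs_trans hδ0 (.cons hstep (.nil _))⟩
      obtain ⟨ht, hr'⟩ := ih hs'
      exact ⟨ht, .cons (show P'.h ⟨s, hq⟩ i o ⟨s', hs'⟩ from hstep) hr'⟩
  have hq0 : q0 ∈ R := (hRdef q0).mpr ⟨[], .nil _⟩
  haveI : Fintype ↥R := Fintype.ofFinite ↥R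
  refine ⟨↥R, inferInstance, P', ⟨q0, hq0⟩, ⟨?_, ?_, ?_, ?_, ?_⟩, ?_⟩
  · intro q i₁ o₁ q₁ i₂ o₂ q₂ h1 h2
    exact hsi q.1 i₁ o₁ q₁.1 i₂ o₂ q₂.1 h1 h2
  · intro q i o q' h o'
    obtain ⟨q'', h''⟩ := hoc q.1 i o q'.1 h o'
    obtain ⟨δ, hδ⟩ := (hRdef q.1).mp q.2
    exact ⟨⟨q'', (hRdef q'').mpr ⟨δ ++ [(i, o')], runs_trans hδ (.cons h'' (.nil _))⟩⟩, h''⟩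
  · intro q i o t₁ t₂ h1 h2
    exact Subtype.ext (hob q.1 i o t₁.1 t₂.1 h1 h2)
  · intro q γ hγ hr
    exact hac q.1 γ hγ (hproj hr)
  · intro q
    obtain ⟨γ, hγ⟩ := (hRdef q.1).mp q.2
    obtain ⟨ht, hr⟩ := hlift γ q0 q.1 hγ hq0
    have heq : (⟨q.1, ht⟩ : ↥R) = q := Subtype.ext rfl
    exact ⟨γ, heq ▸ hr⟩
  · intro γ q hr hd
    refine hhom γ q.1 (hproj hr) ?_
    intro i o q' h'
    obtain ⟨δ, hδ⟩ := (hRdef q.1).mp q.2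
    exact hd i o ⟨q', (hRdef q').mpr ⟨δ ++ [(i, o)], runs_trans hδ (.cons h' (.nil _))⟩⟩ h'

end Aux

end FSM

/-- the pair `(s₁, s₂)` is adaptively homing iff the intersection
`S/s₁ ∩ S/s₂` has no complete submachine. -/
theorem pair_adaptively_homing_iff_no_completeSubmachine
    {S I O : Type} [Fintype S] [Fintype I] [Fintype O]
    (M : FSM S I O) (hc : M.Complete) (ho : M.Observable) (s₁ s₂ : S) (hne : s₁ ≠ s₂) :
    M.AdaptivelyHomingPair s₁ s₂ ↔ ¬ M.HasCompleteSubmachine s₁ s₂ := by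
  constructor
  · rintro ⟨Q, _inst, P, q0, tc, hom⟩ hsub
    obtain ⟨A, hA0, hAd, hAc⟩ := hsub
    have EXT : ∀ n : ℕ, ∃ (γ : List (I × O)) (q : Q) (t₁ t₂ : S),
        γ.length = n ∧ P.Runs q0 γ q ∧ (t₁, t₂) ∈ A ∧ M.Runs s₁ γ t₁ ∧ M.Runs s₂ γ t₂ := by
      intro n
      induction n with
      | zero => exact ⟨[], q0, s₁, s₂, rfl, .nil _, hA0, .nil _, .nil _⟩
      | succ n ihn =>
        obtain ⟨γ, q, t₁, t₂, hlen, hrun, hmem, hr1, hr2⟩ := ihn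
        by_cases hd : P.Deadlock q
        · obtain ⟨s, hs⟩ := hom γ q hrun hd
          have e1 := hs s₁ (by simp) t₁ hr1
          have e2 := hs s₂ (by simp) t₂ hr2
          exact absurd (e1.trans e2.symm) (hAd (t₁, t₂) hmem)
        · simp only [FSM.Deadlock, not_forall, not_not] at hd
          obtain ⟨i, o, q', hq'⟩ := hd
          obtain ⟨o', p', hp', hp'A⟩ := hAc (t₁, t₂) hmem i
          obtain ⟨pa, pb⟩ := p'
          have hp'' : M.h t₁ i o' pa ∧ M.h t₂ i o' pb ∧ pa ≠ pb := hp'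
          obtain ⟨hh1, hh2, hpne⟩ := hp''
          obtain ⟨q'', hq''⟩ := tc.outputComplete q i o q' hq' o'
          exact ⟨γ ++ [(i, o')], q'', pa, pb, by simp [hlen],
            FSM.runs_trans hrun (.cons hq'' (.nil _)), hp'A,
            FSM.runs_trans hr1 (.cons hh1 (.nil _)),
            FSM.runs_trans hr2 (.cons hh2 (.nil _))⟩
    obtain ⟨γ, q, t₁, t₂, hlen, hrun, -, -, -⟩ := EXT (Fintype.card Q)
    have hb := FSM.runs_length_lt tc.observable tc.acyclic hrun
    omega
  · intro hno
    have hI : Nonempty I := by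
      by_contra hI
      refine hno ⟨{(s₁, s₂)}, rfl, ?_, ?_⟩
      · intro p hp
        rw [Set.mem_singleton_iff] at hp
        subst hp
        exact hne
      · intro q hq i
        exact absurd ⟨i⟩ hI
    have hO : Nonempty O := by
      obtain ⟨i⟩ := hI
      obtain ⟨o, s', -⟩ := hc s₁ i
      exact ⟨o⟩
    haveI := hI
    have hss : ∀ n, M.interSurv (n + 1) ⊆ M.interSurv n := by
      intro n q hq
      exact hq.1
    have hsub0 : ∀ n, M.interSurv n ⊆ M.interSurv 0 := by
      intro n
      induction n with
      | zero => exact fun _ h => h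
      | succ k ihk => exact fun p hp => ihk (hss k hp)
    have hstab : ∃ N, M.interSurv (N + 1) = M.interSurv N := by
      by_contra hcon
      push_neg at hcon
      have hlt : ∀ n, (M.interSurv (n + 1)).ncard < (M.interSurv n).ncard := by
        intro n
        exact Set.ncard_lt_ncard ((hss n).ssubset_of_ne (hcon n)) (Set.toFinite _)
      have hle : ∀ n, (M.interSurv n).ncard + n ≤ (M.interSurv 0).ncard := by
        intro n
        induction n with
        | zero => simp
        | succ k ihk => have := hlt k; omega
      have := hle ((M.interSurv 0).ncard + 1)
      omega
    obtain ⟨N, hN⟩ := hstab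
    have h12 : (s₁, s₂) ∉ M.interSurv N := by
      intro hmem
      refine hno ⟨M.interSurv N, hmem, ?_, ?_⟩
      · intro p hp
        exact hsub0 N hp
      · intro q hq i
        have hq' : q ∈ M.interSurv (N + 1) := by rw [hN]; exact hq
        exact hq'.2 i
    exact FSM.prune M {s₁, s₂} (M.rawTC) (Sum.inl (s₁, s₂))
      (FSM.rawTC_single M) (FSM.rawTC_oc M) (FSM.rawTC_obs ho) (FSM.rawTC_acyclic M)
      (FSM.rawTC_homing ho hne hO ⟨N, h12⟩)
end

section
/- Let Q be the intersection FSM S/s1 ∩ S/s2 of a complete observable FSM S. Define the iterative deletion process: repeatedly remove from Q any state that has some input with no defined outgoing transition (to a remaining state), together with its incoming transitions. Then the initial state (s1,s2) is eventually removed by this process if and only if Q has no complete submachine. -/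
/-- the initial state `(s₁, s₂)` is eventually removed by the iterative
deletion process on the intersection FSM iff the intersection has no complete submachine. -/
theorem interSurv_removes_initial_iff_no_completeSubmachine
    {S I O : Type} [Fintype S] [Fintype I] [Fintype O]
    (M : FSM S I O) (hc : M.Complete) (ho : M.Observable) (s₁ s₂ : S) (hne : s₁ ≠ s₂) :
    (∃ n : ℕ, (s₁, s₂) ∉ M.interSurv n) ↔ ¬ M.HasCompleteSubmachine s₁ s₂ := by
  classical
  have hsub : ∀ n, M.interSurv (n + 1) ⊆ M.interSurv n := fun n p hp => hp.1
  have hmono : ∀ m n, m ≤ n → M.interSurv n ⊆ M.interSurv m := by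
    intro m n h
    induction h with
    | refl => exact fun _ h => h
    | step _ ih => exact fun p hp => ih (hsub _ hp)
  constructor
  · rintro ⟨n, hn⟩ ⟨A, hA0, hAd, hAc⟩
    have key : ∀ m, A ⊆ M.interSurv m := by
      intro m
      induction m with
      | zero => exact fun p hp => hAd p hp
      | succ m ih =>
        intro p hp
        refine ⟨ih hp, fun i => ?_⟩
        rcases hAc p hp i with ⟨o, q', hq', hq'A⟩
        exact ⟨o, q', hq', ih hq'A⟩
    exact hn (key n hA0)
  · intro hno
    by_contra hall
    push_neg at hall
    set f : ℕ → ℕ := fun n => (M.interSurv n).toFinset.card with hf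
    have hfmono : ∀ n, f (n + 1) ≤ f n := by
      intro n
      apply Finset.card_le_card
      intro x hx
      simp only [Set.mem_toFinset] at *
      exact hsub n hx
    obtain ⟨c, N, hfN⟩ : ∃ c N, f N = c ∧ ∀ m, c ≤ f m := by
      have hne' : (Set.range f).Nonempty := ⟨f 0, 0, rfl⟩
      obtain ⟨N, hN⟩ := Nat.sInf_mem hne'
      exact ⟨sInf (Set.range f), N, hN, fun m => Nat.sInf_le ⟨m, rfl⟩⟩
    have heqcard : f (N + 1) = f N := le_antisymm (hfmono N) (hfN.1 ▸ hfN.2 (N + 1))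
    have heq : M.interSurv (N + 1) = M.interSurv N := by
      have := Finset.eq_of_subset_of_card_le
        (s := (M.interSurv (N + 1) : Set (S × S)).toFinset)
        (t := (M.interSurv N : Set (S × S)).toFinset)
        (by intro x hx; simp only [Set.mem_toFinset] at *; exact hsub N hx)
        (le_of_eq heqcard.symm)
      exact Set.toFinset_inj.mp this
    apply hno
    refine ⟨M.interSurv N, hall N, fun p hp => hmono 0 N (Nat.zero_le N) hp, ?_⟩
    intro q hq i
    have hq' : q ∈ M.interSurv (N + 1) := heq ▸ hq
    exact hq'.2 i
end

section
/- If two states s1 and s2 of a complete observable FSM S with n states are adaptively homing, then there exists a homing test case for {s1,s2} with at most n(n−1)/2 + 1 states and at most (n(n−1)/2)·|O| transitions. -/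
namespace FSM
variable {S I O Q : Type}

lemma Runs.append {M : FSM S I O} {s t t' : S} {γ : List (I × O)} {i : I} {o : O}
    (hr : M.Runs s γ t) (ht : M.h t i o t') : M.Runs s (γ ++ [(i, o)]) t' := by
  induction hr with
  | nil s => exact Runs.cons ht (Runs.nil _)
  | cons h1 h2 ih => exact Runs.cons h1 (ih ht)

lemma runs_nil_eq {M : FSM S I O} {s t : S} (h : M.Runs s [] t) : t = s := by
  cases h; rfl

lemma runs_append_inv {M : FSM S I O} {s t : S} {γ : List (I × O)} {i : I} {o : O}
    (h : M.Runs s (γ ++ [(i, o)]) t) : ∃ u, M.Runs s γ u ∧ M.h u i o t := by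
  induction γ generalizing s with
  | nil =>
    simp only [List.nil_append] at h
    cases h with
    | cons h1 h2 => rw [runs_nil_eq h2] at *; exact ⟨_, Runs.nil _, h1⟩
  | cons a γ ih =>
    obtain ⟨a1, a2⟩ := a
    cases h with
    | cons h1 h2 =>
      obtain ⟨u, hu1, hu2⟩ := ih h2
      exact ⟨u, Runs.cons h1 hu1, hu2⟩

lemma runs_unique {M : FSM S I O} (ho : M.Observable) {s t₁ t₂ : S} {γ : List (I × O)}
    (h1 : M.Runs s γ t₁) (h2 : M.Runs s γ t₂) : t₁ = t₂ := by
  induction γ generalizing s with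
  | nil => rw [runs_nil_eq h1, runs_nil_eq h2]
  | cons a γ ih =>
    obtain ⟨i, o⟩ := a
    cases h1 with | cons ha1 hb1 =>
    cases h2 with | cons ha2 hb2 =>
    exact ih (by rwa [ho _ _ _ _ _ ha1 ha2] at hb1) hb2

lemma runs_of_reflTransGen {P : FSM Q I O} {a b : Q}
    (h : Relation.ReflTransGen (fun x y => ∃ i o, P.h x i o y) a b) :
    ∃ γ, P.Runs a γ b := by
  induction h with
  | refl => exact ⟨[], Runs.nil _⟩
  | tail _ hbc ih =>
    obtain ⟨γ, hγ⟩ := ih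
    obtain ⟨i, o, hio⟩ := hbc
    exact ⟨γ ++ [(i, o)], hγ.append hio⟩

lemma transGen_runs {P : FSM Q I O} {a b : Q}
    (h : Relation.TransGen (fun x y => ∃ i o, P.h y i o x) a b) :
    ∃ γ, γ ≠ [] ∧ P.Runs b γ a := by
  induction h with
  | single hba =>
    obtain ⟨i, o, hio⟩ := hba
    exact ⟨[(i, o)], by simp, Runs.cons hio (Runs.nil _)⟩
  | tail _ hcb ih =>
    obtain ⟨γ, hne, hγ⟩ := ih
    obtain ⟨i, o, hio⟩ := hcb
    exact ⟨(i, o) :: γ, by simp, Runs.cons hio hγ⟩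

lemma runs_rank_lt {P : FSM Q I O} (f : Q → ℕ)
    (hf : ∀ q i o q', P.h q i o q' → f q' < f q) :
    ∀ {q γ t}, P.Runs q γ t → γ ≠ [] → f t < f q := by
  intro q γ t h hne
  induction h with
  | nil => exact absurd rfl hne
  | cons h1 h2 ih =>
    rcases h2 with _ | _
    · exact hf _ _ _ _ h1
    · exact (ih (by simp)).trans (hf _ _ _ _ h1)
end FSM

namespace FSM
variable {S I O : Type} {M : FSM S I O}

lemma inter_swap {p p' : S × S} {i : I} {o : O} (h : M.inter.h p i o p') :
    M.inter.h p.swap i o p'.swap := by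
  obtain ⟨h1, h2, h3⟩ := h
  exact ⟨h2, h1, fun he => h3 he.symm⟩

lemma step_subset (N : FSM S I O) (A : Set S) : N.step A ⊆ A := fun q hq => hq.1

lemma interSurv_succ_subset (k : ℕ) : M.interSurv (k + 1) ⊆ M.interSurv k :=
  step_subset _ _

lemma interSurv_anti {j k : ℕ} (h : j ≤ k) : M.interSurv k ⊆ M.interSurv j := by
  induction k with
  | zero => simp_all
  | succ k ih =>
    rcases Nat.lt_or_ge j (k+1) with hl | hg
    · exact (interSurv_succ_subset k).trans (ih (Nat.lt_succ_iff.mp hl))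
    · have : j = k + 1 := le_antisymm h hg
      subst this; exact subset_rfl

lemma interSurv_swap : ∀ k, ∀ p ∈ M.interSurv k, p.swap ∈ M.interSurv k := by
  intro k
  induction k with
  | zero => intro p hp; exact fun he => hp he.symm
  | succ k ih =>
    rintro p ⟨hp1, hp2⟩
    refine ⟨ih p hp1, fun i => ?_⟩
    obtain ⟨o, q', hh, hq'⟩ := hp2 i
    exact ⟨o, q'.swap, inter_swap hh, ih q' hq'⟩

lemma G_ne {p : S × S} (hp : p ∈ M.greatestInterClosed) : p.1 ≠ p.2 := by
  obtain ⟨A, ⟨hA1, _⟩, hpA⟩ := hp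
  exact hA1 p hpA

lemma G_inputClosed : InputClosed M.inter M.greatestInterClosed := by
  rintro q ⟨A, ⟨hA1, hA2⟩, hqA⟩ i
  obtain ⟨o, q', hh, hq'⟩ := hA2 q hqA i
  exact ⟨o, q', hh, A, ⟨hA1, hA2⟩, hq'⟩

lemma G_swap {p : S × S} (hp : p ∈ M.greatestInterClosed) :
    p.swap ∈ M.greatestInterClosed := by
  obtain ⟨A, ⟨hA1, hA2⟩, hpA⟩ := hp
  refine ⟨Prod.swap '' A, ⟨?_, ?_⟩, ⟨p, hpA, rfl⟩⟩
  · rintro q ⟨r, hr, rfl⟩; exact fun he => hA1 r hr he.symm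
  · rintro q ⟨r, hr, rfl⟩ i
    obtain ⟨o, q', hh, hq'⟩ := hA2 r hr i
    exact ⟨o, q'.swap, inter_swap hh, q', hq', rfl⟩

lemma G_subset_interSurv : ∀ k, M.greatestInterClosed ⊆ M.interSurv k := by
  intro k
  induction k with
  | zero => intro p hp; exact G_ne hp
  | succ k ih =>
    intro p hp
    refine ⟨ih hp, fun i => ?_⟩
    obtain ⟨o, q', hh, hq'⟩ := G_inputClosed p hp i
    exact ⟨o, q', hh, ih hq'⟩

lemma mem_G_of_forall [Finite S] [Finite O] {p : S × S}
    (hp : ∀ k, p ∈ M.interSurv k) : p ∈ M.greatestInterClosed := by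
  refine ⟨{q | ∀ k, q ∈ M.interSurv k}, ⟨fun q hq => hq 0, ?_⟩, hp⟩
  intro q hq i
  have hch : ∀ k : ℕ, ∃ x : O × (S × S), M.inter.h q i x.1 x.2 ∧ x.2 ∈ M.interSurv k := by
    intro k
    obtain ⟨o, q', hh, hq'⟩ := (hq (k + 1)).2 i
    exact ⟨(o, q'), hh, hq'⟩
  choose f hf1 hf2 using hch
  obtain ⟨y, hy⟩ := Finite.exists_infinite_fiber f
  have hyn : (f ⁻¹' {y}).Infinite := Set.infinite_coe_iff.mp hy
  obtain ⟨m, hm, _⟩ := hyn.exists_gt 0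
  refine ⟨y.1, y.2, by rw [← hm]; exact hf1 m, fun k => ?_⟩
  obtain ⟨m', hm', hk⟩ := hyn.exists_gt k
  have := hf2 m'
  rw [hm'] at this
  exact interSurv_anti hk.le this

noncomputable def rank (M : FSM S I O) (p : S × S) : ℕ :=
  sInf {k | p ∉ M.interSurv k}

lemma rank_nonempty [Finite S] [Finite O] {p : S × S} (hp : p ∉ M.greatestInterClosed) :
    {k | p ∉ M.interSurv k}.Nonempty := by
  by_contra h
  rw [Set.not_nonempty_iff_eq_empty] at h
  exact hp (mem_G_of_forall (fun k => by_contra fun hk => (Set.eq_empty_iff_forall_notMem.mp h k) hk))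

lemma not_mem_surv_rank [Finite S] [Finite O] {p : S × S} (hp : p ∉ M.greatestInterClosed) :
    p ∉ M.interSurv (M.rank p) := Nat.sInf_mem (rank_nonempty hp)

lemma rank_pos_s4 [Finite S] [Finite O] {p : S × S} (hp : p ∉ M.greatestInterClosed)
    (hne : p.1 ≠ p.2) : 0 < M.rank p := by
  rcases Nat.eq_zero_or_pos (M.rank p) with h | h
  · exact absurd (h ▸ not_mem_surv_rank hp) (by simpa [interSurv] using hne)
  · exact h

lemma rank_le_of_not_mem {p : S × S} {k : ℕ} (h : p ∉ M.interSurv k) : M.rank p ≤ k :=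
  Nat.sInf_le h

lemma mem_surv_of_lt_rank {p : S × S} {k : ℕ} (h : k < M.rank p) : p ∈ M.interSurv k :=
  by_contra fun hn => absurd (rank_le_of_not_mem hn) (by omega)

lemma rank_swap (p : S × S) : M.rank p.swap = M.rank p := by
  unfold rank
  congr 1
  ext k
  simp only [Set.mem_setOf_eq]
  constructor
  · intro h hmem; exact h (interSurv_swap k p hmem)
  · intro h hmem; exact h (by simpa using interSurv_swap k p.swap hmem)

lemma kill_input [Finite S] [Finite O] {p : S × S} (hp : p ∉ M.greatestInterClosed)
    (hne : p.1 ≠ p.2) :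
    ∃ i : I, ∀ (o : O) (p' : S × S), M.inter.h p i o p' → p' ∉ M.interSurv (M.rank p - 1) := by
  have h1 : p ∉ M.interSurv (M.rank p) := not_mem_surv_rank hp
  have h2 : p ∈ M.interSurv (M.rank p - 1) := mem_surv_of_lt_rank (by have := rank_pos_s4 hp hne; omega)
  have h3 : M.rank p = (M.rank p - 1) + 1 := by have := rank_pos_s4 hp hne; omega
  rw [h3] at h1
  have h4 : ¬ ∀ i, ∃ o q', M.inter.h p i o q' ∧ q' ∈ M.interSurv (M.rank p - 1) :=
    fun hall => h1 ⟨h2, hall⟩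
  push_neg at h4
  obtain ⟨i, hi⟩ := h4
  exact ⟨i, fun o p' hh hmem => (hi o p' hh) hmem⟩

end FSM

namespace FSM
variable {S I O : Type}

lemma pair_not_mem_G {M : FSM S I O} {s₁ s₂ : S} (hp : M.AdaptivelyHomingPair s₁ s₂) :
    (s₁, s₂) ∉ M.greatestInterClosed := by
  intro hG
  obtain ⟨Q0, fQ0, P0, q0, htc, hhom⟩ := hp
  haveI : Finite Q0 := Finite.of_fintype Q0
  let r : Q0 → Q0 → Prop := Relation.TransGen (fun x y => ∃ i o, P0.h y i o x)
  haveI : IsTrans Q0 r := ⟨fun _ _ _ => Relation.TransGen.trans⟩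
  haveI : IsIrrefl Q0 r := ⟨fun a ha => by
    obtain ⟨γ, hne, hγ⟩ := transGen_runs ha
    exact htc.acyclic a γ hne hγ⟩
  have wf := Finite.wellFounded_of_trans_of_irrefl r
  have main : ∀ q : Q0, ∀ γ (t : S × S), P0.Runs q0 γ q → M.Runs s₁ γ t.1 →
      M.Runs s₂ γ t.2 → t ∈ M.greatestInterClosed → False := by
    intro q
    induction q using WellFounded.induction wf with
    | _ q ih =>
    intro γ t hrun h1 h2 htG
    by_cases hd : P0.Deadlock q
    · obtain ⟨s, hs⟩ := hhom γ q hrun hd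
      have e1 := hs s₁ (by simp) t.1 h1
      have e2 := hs s₂ (by simp) t.2 h2
      exact G_ne htG (e1.trans e2.symm)
    · simp only [Deadlock, not_forall, not_not] at hd
      obtain ⟨i, o1, q1, hq1⟩ := hd
      obtain ⟨o, t', hh, ht'G⟩ := G_inputClosed t htG i
      obtain ⟨ha, hb, hne⟩ := hh
      obtain ⟨q', hq'⟩ := htc.outputComplete q i o1 q1 hq1 o
      exact ih q' (Relation.TransGen.single ⟨i, o, hq'⟩)
        (γ ++ [(i, o)]) t' (hrun.append hq') (h1.append ha) (h2.append hb) ht'G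
  exact main q0 [] (s₁, s₂) (Runs.nil _) (Runs.nil _) (Runs.nil _) hG

end FSM

lemma card_lt_pairs (n : ℕ) :
    Fintype.card {p : Fin n × Fin n // p.1 < p.2} = n * (n - 1) / 2 := by
  classical
  have e : {p : Fin n × Fin n // p.1 < p.2} ≃ Σ a : Fin n, {b : Fin n // a < b} :=
    { toFun := fun x => ⟨x.1.1, x.1.2, x.2⟩
      invFun := fun y => ⟨(y.1, y.2.1), y.2.2⟩
      left_inv := fun x => rfl
      right_inv := fun y => rfl }
  rw [Fintype.card_congr e, Fintype.card_sigma]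
  have hcard : ∀ a : Fin n, Fintype.card {b : Fin n // a < b} = n - 1 - a := by
    intro a
    rw [Fintype.card_subtype]
    have : (Finset.univ.filter (fun b : Fin n => a < b)) = Finset.Ioi a := by
      ext; simp
    rw [this, Fin.card_Ioi]
  simp only [hcard]
  rw [Fin.sum_univ_eq_sum_range (fun k => n - 1 - k) n]
  have := Finset.sum_range_reflect (fun k => k) n
  have h2 : ∑ k ∈ Finset.range n, (n - 1 - k) = ∑ k ∈ Finset.range n, k := by
    rw [← Finset.sum_range_reflect (fun k => k) n]
  rw [h2, Finset.sum_range_id]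

/-- if `(s₁, s₂)` is adaptively homing in a complete observable FSM with `n`
states, there is a homing test case for `{s₁, s₂}` with at most `n(n-1)/2 + 1` states and at
most `(n(n-1)/2) · |O|` transitions. -/

theorem adaptively_homing_pair_small_test_case
    {S I O : Type} [Fintype S] [Fintype I] [Fintype O]
    (M : FSM S I O) (hc : M.Complete) (ho : M.Observable) (s₁ s₂ : S)
    (hp : M.AdaptivelyHomingPair s₁ s₂) :
    ∃ (Q : Type) (_ : Fintype Q) (P : FSM Q I O) (q0 : Q),
      P.IsTestCase q0 ∧ FSM.IsHomingFor M {s₁, s₂} P q0 ∧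
      Nat.card Q ≤ Fintype.card S * (Fintype.card S - 1) / 2 + 1 ∧
      Nat.card {t : Q × I × O × Q // P.h t.1 t.2.1 t.2.2.1 t.2.2.2} ≤
        (Fintype.card S * (Fintype.card S - 1) / 2) * Fintype.card O := by
  classical
  by_cases hss : s₁ = s₂
  · -- trivial one-state test case
    refine ⟨PUnit, inferInstance, ⟨fun _ _ _ _ => False⟩, PUnit.unit, ?_, ?_, ?_, ?_⟩
    · refine ⟨fun _ _ _ _ _ _ _ h => h.elim, fun _ _ _ _ h => h.elim,
        fun _ _ _ _ _ h1 => h1.elim, fun q γ hne hr => ?_, fun q => ⟨[], ?_⟩⟩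
      · cases hr with
        | nil => exact hne rfl
        | cons h1 _ => exact h1
      · cases q; exact FSM.Runs.nil _
    · intro γ q hr _
      cases hr with
      | nil =>
        refine ⟨s₁, ?_⟩
        rintro s' (rfl | rfl) t ht
        · exact FSM.runs_nil_eq ht
        · rw [FSM.runs_nil_eq ht, hss]
      | cons h1 _ => exact h1.elim
    · simp [Nat.card_eq_fintype_card]
    · haveI : IsEmpty {t : PUnit × I × O × PUnit //
          FSM.h ⟨fun _ _ _ _ => False⟩ t.1 t.2.1 t.2.2.1 t.2.2.2} := ⟨fun t => t.2⟩
      simp [Nat.card_of_isEmpty]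
  · have hG : (s₁, s₂) ∉ M.greatestInterClosed := FSM.pair_not_mem_G hp
    have hI : Nonempty I := by
      by_contra hI
      exact hG ⟨{p | p.1 ≠ p.2}, ⟨fun p h => h, fun q hq i => (hI ⟨i⟩).elim⟩, hss⟩
    set n := Fintype.card S with hn
    set e : S ≃ Fin n := Fintype.equivFin S with he
    set canon : S × S → S × S := fun p => if e p.1 ≤ e p.2 then p else p.swap with hcanon
    set Canonical : S × S → Prop := fun p => e p.1 < e p.2 with hCanonical
    have canon_or : ∀ p : S × S, canon p = p ∨ canon p = p.swap := by
      intro p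
      by_cases h : e p.1 ≤ e p.2 <;> simp [hcanon, h]
    have canon_canonical : ∀ p : S × S, p.1 ≠ p.2 → Canonical (canon p) := by
      intro p hne
      by_cases h : e p.1 ≤ e p.2 <;> simp only [hcanon, hCanonical, h, if_pos, if_neg,
        if_true, if_false]
      · exact lt_of_le_of_ne h (fun hee => hne (e.injective hee))
      · simpa [Prod.swap] using lt_of_not_ge h
    set Act : S × S → Prop := fun p => p ∉ M.greatestInterClosed ∧ p.1 ≠ p.2 with hAct
    have act_canon : ∀ p : S × S, Act p → Act (canon p) := by
      intro p hap
      rcases canon_or p with h | h <;> rw [h]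
      · exact hap
      · exact ⟨fun hmem => hap.1 (by simpa using FSM.G_swap hmem), fun hee => hap.2 hee.symm⟩
    set inp : S × S → I := fun p =>
      if h : ∃ i : I, ∀ (o : O) (p' : S × S), M.inter.h p i o p' →
          p' ∉ M.interSurv (M.rank p - 1)
      then h.choose else Classical.arbitrary I with hinp
    have inp_spec : ∀ p, Act p → ∀ (o : O) (p' : S × S), M.inter.h p (inp p) o p' →
        p' ∉ M.interSurv (M.rank p - 1) := by
      intro p hap
      have h := FSM.kill_input hap.1 hap.2
      rw [hinp]
      simp only [dif_pos h]
      exact h.choose_spec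
    set tgt : S × S → O → Option (S × S) := fun p o =>
      if h : ∃ p', M.inter.h p (inp p) o p' then some (canon h.choose) else none with htgt
    have tgt_some_inv : ∀ p o x, tgt p o = some x →
        ∃ p', M.inter.h p (inp p) o p' ∧ x = canon p' := by
      intro p o x hx
      rw [htgt] at hx
      simp only at hx
      split at hx
      · next h => exact ⟨h.choose, h.choose_spec, (Option.some_inj.mp hx).symm⟩
      · exact absurd hx (by simp)
    have tgt_none_inv : ∀ p o, tgt p o = none → ¬ ∃ p', M.inter.h p (inp p) o p' := by
      intro p o hx
      rw [htgt] at hx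
      simp only at hx
      split at hx
      · exact absurd hx (by simp)
      · next h => exact h
    set Pb : FSM (Option (S × S)) I O :=
      ⟨fun q i o q' => ∃ p, q = some p ∧ Act p ∧ i = inp p ∧ q' = tgt p o⟩ with hPb
    set c0 : S × S := canon (s₁, s₂) with hc0
    have hc0A : Act c0 := act_canon _ ⟨hG, hss⟩
    set Reach : Option (S × S) → Prop :=
      Relation.ReflTransGen (fun a b => ∃ i o, Pb.h a i o b) (some c0) with hReach
    set Qt := {x : Option (S × S) // Reach x} with hQt
    haveI : Finite Qt := Subtype.finite
    set P : FSM Qt I O := ⟨fun a i o b => Pb.h a.1 i o b.1⟩ with hP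
    set q0 : Qt := ⟨some c0, Relation.ReflTransGen.refl⟩ with hq0
    -- every reachable `some` state is active and canonical
    have reach_some : ∀ x, Reach x → ∀ p, x = some p → Act p ∧ Canonical p := by
      intro x hx
      induction hx with
      | refl =>
        intro p hps
        obtain rfl := Option.some_inj.mp hps.symm
        exact ⟨hc0A, canon_canonical _ hss⟩
      | tail hab hbc ih =>
        intro p hps
        obtain ⟨i, o, p', hb, hap', hi, hcp⟩ := hbc
        subst hps
        obtain ⟨p'', hint, hcan⟩ := tgt_some_inv p' o p hcp.symm
        have hne : p''.1 ≠ p''.2 := hint.2.2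
        have hnG : p'' ∉ M.greatestInterClosed := fun hm =>
          inp_spec p' hap' o p'' hint (FSM.G_subset_interSurv _ hm)
        rw [hcan]
        exact ⟨act_canon _ ⟨hnG, hne⟩, canon_canonical _ hne⟩
    have rank_canon : ∀ p : S × S, M.rank (canon p) = M.rank p := by
      intro p
      rcases canon_or p with h | h <;> rw [h]
      exact FSM.rank_swap p
    -- rank decrease
    have hdec : ∀ (a : Qt) i o (b : Qt), P.h a i o b →
        (fun x : Qt => match x.1 with | none => 0 | some p => M.rank p) b <
        (fun x : Qt => match x.1 with | none => 0 | some p => M.rank p) a := by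
      intro a i o b hab
      obtain ⟨p, hap, hact, hi, hb⟩ := hab
      have hpos : 0 < M.rank p := FSM.rank_pos_s4 hact.1 hact.2
      simp only [hap]
      cases hbv : b.1 with
      | none => simpa [hbv] using hpos
      | some x =>
        rw [hbv] at hb
        obtain ⟨p', hint, hx⟩ := tgt_some_inv p o x hb.symm
        have h1 : M.rank p' ≤ M.rank p - 1 :=
          FSM.rank_le_of_not_mem (inp_spec p hact o p' hint)
        have h2 : M.rank x = M.rank p' := by rw [hx, rank_canon]
        simp only []
        omega
    refine ⟨Qt, Fintype.ofFinite Qt, P, q0, ?_, ?_, ?_, ?_⟩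
    · constructor
      · rintro q i₁ o₁ q₁ i₂ o₂ q₂ ⟨p, hqp, _, hi1, _⟩ ⟨p2, hqp2, _, hi2, _⟩
        rw [hqp] at hqp2
        obtain rfl := Option.some_inj.mp hqp2
        rw [hi1, hi2]
      · rintro q i o q' ⟨p, hqp, hact, hi, _⟩ o'
        refine ⟨⟨tgt p o', Relation.ReflTransGen.tail q.2 ⟨i, o', p, hqp, hact, hi, rfl⟩⟩,
          p, hqp, hact, hi, rfl⟩
      · rintro q i o t₁ t₂ ⟨p, hqp, _, _, h1⟩ ⟨p2, hqp2, _, _, h2⟩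
        rw [hqp] at hqp2
        obtain rfl := Option.some_inj.mp hqp2
        exact Subtype.ext (h1.trans h2.symm)
      · intro q γ hne hr
        exact lt_irrefl _ (FSM.runs_rank_lt _ hdec hr hne)
      · intro y
        have key : ∀ x (hx : Reach x) (y : Qt), y.1 = x → ∃ γ, P.Runs q0 γ y := by
          intro x hx
          induction hx with
          | refl =>
            intro y hy
            have : y = q0 := Subtype.ext hy
            exact ⟨[], this ▸ FSM.Runs.nil _⟩
          | tail hab hbc ih =>
            intro y hy
            obtain ⟨i, o, hio⟩ := hbc
            obtain ⟨γ, hγ⟩ := ih ⟨_, hab⟩ rfl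
            exact ⟨γ ++ [(i, o)], hγ.append (show Pb.h _ i o y.1 by rw [hy]; exact hio)⟩
        exact key y.1 y.2 y rfl
    · -- homing
      have inv : ∀ γ (q : Qt), P.Runs q0 γ q →
          (∀ p, q.1 = some p →
            (M.Runs s₁ γ p.1 ∧ M.Runs s₂ γ p.2) ∨ (M.Runs s₁ γ p.2 ∧ M.Runs s₂ γ p.1)) ∧
          (q.1 = none → ∃ s, (∀ t, M.Runs s₁ γ t → t = s) ∧ (∀ t, M.Runs s₂ γ t → t = s)) := by
        intro γ
        induction γ using List.reverseRecOn with
        | nil =>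
          intro q hr
          have hqv : q = q0 := FSM.runs_nil_eq hr
          subst hqv
          constructor
          · intro p hps
            obtain rfl := Option.some_inj.mp hps.symm
            rcases canon_or (s₁, s₂) with h | h <;> rw [show c0 = canon (s₁, s₂) from rfl, h]
            · exact Or.inl ⟨FSM.Runs.nil _, FSM.Runs.nil _⟩
            · exact Or.inr ⟨FSM.Runs.nil _, FSM.Runs.nil _⟩
          · intro hnone
            exact absurd hnone (by simp [hq0])
        | append_singleton γ io ih =>
          obtain ⟨i, o⟩ := io
          intro q hr
          obtain ⟨u, hu, hstep⟩ := FSM.runs_append_inv hr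
          obtain ⟨p, hup, hact, hieq, hq⟩ := hstep
          subst hieq
          have hinv := (ih u hu).1 p hup
          obtain ⟨a, b, ra, rb, hab⟩ : ∃ a b, M.Runs s₁ γ a ∧ M.Runs s₂ γ b ∧
              ((a, b) = p ∨ (b, a) = p) := by
            rcases hinv with ⟨r1, r2⟩ | ⟨r1, r2⟩
            · exact ⟨p.1, p.2, r1, r2, Or.inl rfl⟩
            · exact ⟨p.2, p.1, r1, r2, Or.inr rfl⟩
          constructor
          · intro p2 hp2
            rw [hq] at hp2
            obtain ⟨p', hint, hcan⟩ := tgt_some_inv p o p2 hp2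
            rcases hab with h | h
            · -- (a,b) = p : runs s₁ → p'.1, s₂ → p'.2
              have r1' : M.Runs s₁ (γ ++ [(inp p, o)]) p'.1 := ra.append (h ▸ hint.1)
              have r2' : M.Runs s₂ (γ ++ [(inp p, o)]) p'.2 := rb.append (h ▸ hint.2.1)
              rcases canon_or p' with hcc | hcc
              · rw [hcan, hcc]; exact Or.inl ⟨r1', r2'⟩
              · rw [hcan, hcc]; exact Or.inr ⟨r1', r2'⟩
            · have r1' : M.Runs s₁ (γ ++ [(inp p, o)]) p'.2 := ra.append (h ▸ hint.2.1)
              have r2' : M.Runs s₂ (γ ++ [(inp p, o)]) p'.1 := rb.append (h ▸ hint.1)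
              rcases canon_or p' with hcc | hcc
              · rw [hcan, hcc]; exact Or.inr ⟨r1', r2'⟩
              · rw [hcan, hcc]; exact Or.inl ⟨r1', r2'⟩
          · intro hnone
            rw [hq] at hnone
            have hne := tgt_none_inv p o hnone
            have hne' : ¬ ∃ x y, M.h a (inp p) o x ∧ M.h b (inp p) o y ∧ x ≠ y := by
              rintro ⟨x, y, hx, hy, hxy⟩
              rcases hab with h | h
              · subst h; exact hne ⟨(x, y), hx, hy, hxy⟩
              · subst h; exact hne ⟨(y, x), hy, hx, fun hh => hxy hh.symm⟩
            have dec1 : ∀ t, M.Runs s₁ (γ ++ [(inp p, o)]) t → M.h a (inp p) o t := by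
              intro t ht
              obtain ⟨u', hu', hstep'⟩ := FSM.runs_append_inv ht
              rwa [FSM.runs_unique ho hu' ra] at hstep'
            have dec2 : ∀ t, M.Runs s₂ (γ ++ [(inp p, o)]) t → M.h b (inp p) o t := by
              intro t ht
              obtain ⟨u', hu', hstep'⟩ := FSM.runs_append_inv ht
              rwa [FSM.runs_unique ho hu' rb] at hstep'
            by_cases hA : ∃ x, M.h a (inp p) o x
            · refine ⟨hA.choose, fun t ht => ho _ _ _ _ _ (dec1 t ht) hA.choose_spec,
                fun t ht => ?_⟩
              have hBt := dec2 t ht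
              by_contra hts
              exact hne' ⟨hA.choose, t, hA.choose_spec, hBt, fun hh => hts hh.symm⟩
            · by_cases hB : ∃ y, M.h b (inp p) o y
              · exact ⟨hB.choose, fun t ht => absurd ⟨t, dec1 t ht⟩ hA,
                  fun t ht => ho _ _ _ _ _ (dec2 t ht) hB.choose_spec⟩
              · exact ⟨s₁, fun t ht => absurd ⟨t, dec1 t ht⟩ hA,
                  fun t ht => absurd ⟨t, dec2 t ht⟩ hB⟩
      intro γ q hr hdead
      cases hqv : q.1 with
      | none =>
        obtain ⟨s, h1, h2⟩ := (inv γ q hr).2 hqv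
        refine ⟨s, ?_⟩
        rintro s' (rfl | rfl) t ht
        · exact h1 t ht
        · exact h2 t ht
      | some p =>
        have hact := (reach_some q.1 q.2 p hqv).1
        obtain ⟨o, _, _⟩ := hc s₁ (inp p)
        exact absurd (show P.h q (inp p) o
            ⟨tgt p o, Relation.ReflTransGen.tail q.2 ⟨inp p, o, p, hqv, hact, rfl, rfl⟩⟩ from
            ⟨p, hqv, hact, rfl, rfl⟩) (hdead _ _ _)
    · -- state count
      have hj : ∃ j : Qt → Option {p : S × S // Canonical p}, Function.Injective j := by
        refine ⟨fun a => if h : ∃ pc : {p : S × S // Canonical p}, a.1 = some pc.1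
          then some h.choose else none, ?_⟩
        intro x y hxy
        apply Subtype.ext
        by_cases hx : ∃ pc : {p : S × S // Canonical p}, x.1 = some pc.1 <;>
          by_cases hy' : ∃ pc : {p : S × S // Canonical p}, y.1 = some pc.1 <;>
          simp only [dif_pos, dif_neg, hx, hy'] at hxy
        · rw [hx.choose_spec, hy'.choose_spec, Option.some_inj.mp hxy]
        · exact absurd hxy (by simp)
        · exact absurd hxy (by simp)
        · cases hxv : x.1 with
          | some p =>
            exact absurd ⟨⟨p, (reach_some x.1 x.2 p hxv).2⟩, hxv⟩ hx
          | none =>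
            cases hyv : y.1 with
            | some p => exact absurd ⟨⟨p, (reach_some y.1 y.2 p hyv).2⟩, hyv⟩ hy'
            | none => rfl
      obtain ⟨j, hjinj⟩ := hj
      have eqv : {p : S × S // Canonical p} ≃ {q : Fin n × Fin n // q.1 < q.2} :=
        Equiv.subtypeEquiv (e.prodCongr e) (fun p => Iff.rfl)
      have hcard : Nat.card {p : S × S // Canonical p} = n * (n - 1) / 2 := by
        rw [Nat.card_eq_fintype_card, Fintype.card_congr eqv, card_lt_pairs]
      calc Nat.card Qt ≤ Nat.card (Option {p : S × S // Canonical p}) :=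
            Nat.card_le_card_of_injective j hjinj
        _ = n * (n - 1) / 2 + 1 := by rw [Finite.card_option, hcard]
    · -- transition count
      have hT : ∀ t : {t : Qt × I × O × Qt // P.h t.1 t.2.1 t.2.2.1 t.2.2.2},
          ∃ pc : {p : S × S // Canonical p}, t.1.1.1 = some pc.1 := by
        intro t
        obtain ⟨p, hp, _⟩ := t.2
        exact ⟨⟨p, (reach_some t.1.1.1 t.1.1.2 p hp).2⟩, hp⟩
      have hjinj : Function.Injective
          (fun t : {t : Qt × I × O × Qt // P.h t.1 t.2.1 t.2.2.1 t.2.2.2} =>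
            ((hT t).choose, t.1.2.2.1)) := by
        intro t t' htt
        have h1 := (hT t).choose_spec
        have h2 := (hT t').choose_spec
        have hpc : (hT t).choose = (hT t').choose := congrArg Prod.fst htt
        have hoeq : t.1.2.2.1 = t'.1.2.2.1 := congrArg Prod.snd htt
        rw [hpc] at h1
        have hq1 : t.1.1 = t'.1.1 := Subtype.ext (h1.trans h2.symm)
        obtain ⟨p, hp, hact, hieq, hq'⟩ := t.2
        obtain ⟨p', hp', hact', hieq', hq''⟩ := t'.2
        rw [hq1, hp'] at hp
        obtain rfl := Option.some_inj.mp hp.symm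
        have hi : t.1.2.1 = t'.1.2.1 := hieq.trans hieq'.symm
        have hq2 : t.1.2.2.2 = t'.1.2.2.2 := by
          apply Subtype.ext
          rw [hq', hq'', hoeq]
        apply Subtype.ext
        exact Prod.ext hq1 (Prod.ext hi (Prod.ext hoeq hq2))
      have eqv : {p : S × S // Canonical p} ≃ {q : Fin n × Fin n // q.1 < q.2} :=
        Equiv.subtypeEquiv (e.prodCongr e) (fun p => Iff.rfl)
      have hcard : Nat.card {p : S × S // Canonical p} = n * (n - 1) / 2 := by
        rw [Nat.card_eq_fintype_card, Fintype.card_congr eqv, card_lt_pairs]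
      calc Nat.card {t : Qt × I × O × Qt // P.h t.1 t.2.1 t.2.2.1 t.2.2.2}
            ≤ Nat.card ({p : S × S // Canonical p} × O) :=
            Nat.card_le_card_of_injective _ hjinj
        _ = (n * (n - 1) / 2) * Fintype.card O := by
            rw [Nat.card_prod, hcard, Nat.card_eq_fintype_card]
end

section
/- If the intersection FSM S/s1 ∩ S/s2 of a complete observable FSM S contains a complete submachine, then for every finite input sequence α there exists an output sequence β of the same length such that α/β is a trace of S/s1 ∩ S/s2 from the initial state (s1,s2); in particular, the (α/β)-successors of s1 and s2 in S exist and are distinct. -/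
lemma interRuns_proj {S I O : Type} (M : FSM S I O) :
    ∀ {p : S × S} {γ : List (I × O)} {p' : S × S}, M.inter.Runs p γ p' →
      M.Runs p.1 γ p'.1 ∧ M.Runs p.2 γ p'.2 := by
  intro p γ p' h
  induction h with
  | nil s => exact ⟨FSM.Runs.nil _, FSM.Runs.nil _⟩
  | cons h1 h2 ih => exact ⟨FSM.Runs.cons h1.1 ih.1, FSM.Runs.cons h1.2.1 ih.2⟩

lemma aux_run {S I O : Type} (M : FSM S I O) (A : Set (S × S))
    (hcl : FSM.InputClosed M.inter A) :
    ∀ (α : List I) (p : S × S), p ∈ A → ∃ β : List O, β.length = α.length ∧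
      ∃ p' : S × S, M.inter.Runs p (α.zip β) p' ∧ p' ∈ A := by
  intro α
  induction α with
  | nil => intro p hp; exact ⟨[], rfl, p, FSM.Runs.nil _, hp⟩
  | cons i α ih =>
    intro p hp
    obtain ⟨o, q, hq, hqA⟩ := hcl p hp i
    obtain ⟨β, hlen, p', hrun, hp'⟩ := ih q hqA
    exact ⟨o :: β, by simp [hlen], p', FSM.Runs.cons hq hrun, hp'⟩

/-- if the intersection `S/s₁ ∩ S/s₂` contains a complete submachine then for
every input sequence `α` there is an equally long output sequence `β` with `α/β` a trace of
the intersection from `(s₁, s₂)`; in particular the `α/β`-successors of `s₁` and `s₂` exist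
and are distinct. -/
theorem completeSubmachine_gives_trace_for_every_input_sequence
    {S I O : Type} [Fintype S] [Fintype I] [Fintype O]
    (M : FSM S I O) (hc : M.Complete) (ho : M.Observable) (s₁ s₂ : S)
    (hsub : M.HasCompleteSubmachine s₁ s₂) :
    ∀ α : List I, ∃ β : List O, β.length = α.length ∧
      ∃ p : S × S, M.inter.Runs (s₁, s₂) (α.zip β) p ∧
        M.Runs s₁ (α.zip β) p.1 ∧ M.Runs s₂ (α.zip β) p.2 ∧ p.1 ≠ p.2 := by
  obtain ⟨A, hmem, hne, hcl⟩ := hsub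
  intro α
  obtain ⟨β, hlen, p', hrun, hp'⟩ := aux_run M A hcl α (s₁, s₂) hmem
  obtain ⟨h1, h2⟩ := interRuns_proj M hrun
  exact ⟨β, hlen, p', hrun, h1, h2, hne p' hp'⟩
end
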